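/- The five-term identity for the infinitesimal weight-2 boundary: for a, b ∈ F \ {0,1} with a ≠ b and all five cross-ratio arguments in F \ {0,1}, one has ∂^D(⟦a⟧) − ∂^D(⟦b⟧) + ∂^D(⟦b/a⟧) − ∂^D(⟦(1−b)/(1−a)⟧) + ∂^D(⟦(1−b⁻¹)/(1−a⁻¹)⟧) = 0 in F ⊗ F^×, where ∂^D(⟦x⟧) = −Dlog(1−x) ⊗ x + Dlog(x) ⊗ (1−x). -/

import Mathlib

open scoped TensorProduct

/-- The infinitesimal weight-2 boundary
`∂^D(⟦x⟧) = −Dlog(1−x) ⊗ x + Dlog(x) ⊗ (1−x) ∈ F ⊗ F^×`, defined for `x ≠ 0, 1`. -/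
noncomputable def boundaryTerm {F : Type*} [Field F] (D : F → F)
    (x : F) (hx0 : x ≠ 0) (hx1 : x ≠ 1) :
    TensorProduct ℤ F (Additive Fˣ) :=
  (-(D (1 - x) / (1 - x))) ⊗ₜ[ℤ] Additive.ofMul (Units.mk0 x hx0) +
    (D x / x) ⊗ₜ[ℤ]
      Additive.ofMul (Units.mk0 (1 - x) (sub_ne_zero_of_ne (Ne.symm hx1)))

/-- Tensoring a divisible element with the 2-torsion unit `-1` gives zero. -/
lemma tmul_ofMul_neg_one {F : Type*} [Field F] [CharZero F] (p : F) :
    p ⊗ₜ[ℤ] Additive.ofMul (-1 : Fˣ) = 0 := by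
  calc p ⊗ₜ[ℤ] Additive.ofMul (-1 : Fˣ)
      = (p/2 + p/2) ⊗ₜ[ℤ] Additive.ofMul (-1 : Fˣ) := by norm_num
    _ = (p/2) ⊗ₜ[ℤ] (Additive.ofMul (-1 : Fˣ) + Additive.ofMul (-1 : Fˣ)) := by
        rw [TensorProduct.add_tmul, TensorProduct.tmul_add]
    _ = 0 := by rw [← ofMul_mul]; simp

/-- Rewrite a boundary term with given expressions for its four components. -/
lemma boundaryTerm_eq {F : Type*} [Field F] (D : F → F) (x : F)
    (hx0 : x ≠ 0) (hx1 : x ≠ 1) (c1 c2 : F) (u v : Additive Fˣ)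
    (h1 : -(D (1 - x) / (1 - x)) = c1) (h2 : D x / x = c2)
    (h3 : Additive.ofMul (Units.mk0 x hx0) = u)
    (h4 : Additive.ofMul (Units.mk0 (1 - x) (sub_ne_zero_of_ne (Ne.symm hx1))) = v) :
    boundaryTerm D x hx0 hx1 = c1 ⊗ₜ[ℤ] u + c2 ⊗ₜ[ℤ] v := by
  subst h1 h2 h3 h4; rfl

/-- The five-term identity for the infinitesimal weight-2 boundary:
`∂^D(⟦a⟧) − ∂^D(⟦b⟧) + ∂^D(⟦b/a⟧) − ∂^D(⟦(1−b)/(1−a)⟧) + ∂^D(⟦(1−b⁻¹)/(1−a⁻¹)⟧) = 0`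
in `F ⊗ F^×`, i.e. the five-term relation generating `ρ₂^D(F)` lies in the kernel of
`∂^D`. -/
theorem five_term_boundary {F : Type*} [Field F] [CharZero F] (D : F → F)
    (hadd : ∀ a b : F, D (a + b) = D a + D b)
    (hmul : ∀ a b : F, D (a * b) = a * D b + b * D a)
    (a b : F) (ha0 : a ≠ 0) (ha1 : a ≠ 1) (hb0 : b ≠ 0) (hb1 : b ≠ 1) (hab : a ≠ b)
    (hc0 : b / a ≠ 0) (hc1 : b / a ≠ 1)
    (hd0 : (1 - b) / (1 - a) ≠ 0) (hd1 : (1 - b) / (1 - a) ≠ 1)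
    (he0 : (1 - b⁻¹) / (1 - a⁻¹) ≠ 0) (he1 : (1 - b⁻¹) / (1 - a⁻¹) ≠ 1) :
    boundaryTerm D a ha0 ha1 - boundaryTerm D b hb0 hb1 +
      boundaryTerm D (b / a) hc0 hc1 -
      boundaryTerm D ((1 - b) / (1 - a)) hd0 hd1 +
      boundaryTerm D ((1 - b⁻¹) / (1 - a⁻¹)) he0 he1 = 0 := by
  -- nonvanishing facts
  have ha1' : (1:F) - a ≠ 0 := sub_ne_zero_of_ne (Ne.symm ha1)
  have hb1' : (1:F) - b ≠ 0 := sub_ne_zero_of_ne (Ne.symm hb1)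
  have hs : a - b ≠ 0 := sub_ne_zero_of_ne hab
  -- basic derivation facts
  have hD1 : D 1 = 0 := by
    have h := hmul 1 1; simp only [mul_one, one_mul] at h; linear_combination -h
  have hDneg : ∀ x : F, D (-x) = -(D x) := by
    intro x
    have hn1 : D (-1 : F) = 0 := by
      have h := hmul (-1 : F) (-1)
      rw [show ((-1:F) * (-1)) = 1 by ring, hD1] at h
      have h2 : (2:F) * D (-1) = 0 := by linear_combination h
      exact (mul_eq_zero.mp h2).resolve_left two_ne_zero
    have h := hmul (-1 : F) x
    rw [show ((-1:F) * x) = -x by ring] at h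
    linear_combination h + x * hn1
  have hdlmul : ∀ x y : F, x ≠ 0 → y ≠ 0 →
      D (x * y) / (x * y) = D x / x + D y / y := by
    intro x y hx hy
    rw [hmul]
    field_simp
    ring
  have hdlinv : ∀ y : F, y ≠ 0 → D y⁻¹ / y⁻¹ = -(D y / y) := by
    intro y hy
    have h := hmul y y⁻¹
    rw [mul_inv_cancel₀ hy, hD1] at h
    rw [div_eq_mul_inv, inv_inv]
    linear_combination -h
  have hdldiv : ∀ x y : F, x ≠ 0 → y ≠ 0 →
      D (x / y) / (x / y) = D x / x - D y / y := by
    intro x y hx hy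
    rw [div_eq_mul_inv x y, hdlmul x y⁻¹ hx (inv_ne_zero hy), hdlinv y hy]
    ring
  have hdlneg : ∀ x : F, x ≠ 0 → D (-x) / (-x) = D x / x := by
    intro x hx
    rw [hDneg]
    field_simp
  -- abbreviations
  set d1 : F := D a / a with hd1def
  set d2 : F := D b / b with hd2def
  set d3 : F := D (1 - a) / (1 - a) with hd3def
  set d4 : F := D (1 - b) / (1 - b) with hd4def
  set d5 : F := D (a - b) / (a - b) with hd5def
  set Ua : Additive Fˣ := Additive.ofMul (Units.mk0 a ha0) with hUa
  set Ub : Additive Fˣ := Additive.ofMul (Units.mk0 b hb0) with hUb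
  set Ua1 : Additive Fˣ := Additive.ofMul (Units.mk0 (1 - a) ha1') with hUa1
  set Ub1 : Additive Fˣ := Additive.ofMul (Units.mk0 (1 - b) hb1') with hUb1
  set Us : Additive Fˣ := Additive.ofMul (Units.mk0 (a - b) hs) with hUs
  set m : Additive Fˣ := Additive.ofMul (-1 : Fˣ) with hm
  -- term 1 : x = a
  have e1 : boundaryTerm D a ha0 ha1 = (-d3) ⊗ₜ[ℤ] Ua + d1 ⊗ₜ[ℤ] Ua1 :=
    boundaryTerm_eq D a ha0 ha1 _ _ _ _ rfl rfl rfl rfl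
  -- term 2 : x = b
  have e2 : boundaryTerm D b hb0 hb1 = (-d4) ⊗ₜ[ℤ] Ub + d2 ⊗ₜ[ℤ] Ub1 :=
    boundaryTerm_eq D b hb0 hb1 _ _ _ _ rfl rfl rfl rfl
  -- term 3 : x = b/a ; 1 - b/a = (a-b)/a
  have k3 : (1:F) - b / a = (a - b) / a := by field_simp
  have e3 : boundaryTerm D (b / a) hc0 hc1 =
      (-(d5 - d1)) ⊗ₜ[ℤ] (Ub - Ua) + (d2 - d1) ⊗ₜ[ℤ] (Us - Ua) := by
    refine boundaryTerm_eq D (b / a) hc0 hc1 _ _ _ _ ?_ ?_ ?_ ?_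
    · rw [k3, hdldiv _ _ hs ha0]
    · rw [hdldiv _ _ hb0 ha0]
    · rw [hUb, hUa, ← ofMul_div]
      congr 1
      ext
      simp
    · rw [hUs, hUa, ← ofMul_div]
      congr 1
      ext
      simp [k3]
  -- term 4 : x = (1-b)/(1-a) ; 1 - x = -((a-b)/(1-a))
  have k4 : (1:F) - (1 - b) / (1 - a) = -((a - b) / (1 - a)) := by
    field_simp
    ring
  have e4 : boundaryTerm D ((1 - b) / (1 - a)) hd0 hd1 =
      (-(d5 - d3)) ⊗ₜ[ℤ] (Ub1 - Ua1) + (d4 - d3) ⊗ₜ[ℤ] (m + (Us - Ua1)) := by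
    refine boundaryTerm_eq D ((1 - b) / (1 - a)) hd0 hd1 _ _ _ _ ?_ ?_ ?_ ?_
    · rw [k4, hdlneg _ (div_ne_zero hs ha1'), hdldiv _ _ hs ha1']
    · rw [hdldiv _ _ hb1' ha1']
    · rw [hUb1, hUa1, ← ofMul_div]
      congr 1
      ext
      simp
    · rw [hUs, hUa1, hm, ← ofMul_div, ← ofMul_mul]
      congr 1
      ext
      simp [k4]
  -- term 5 : x = (1-b⁻¹)/(1-a⁻¹) = (1-b)*a/((1-a)*b) ; 1 - x = -((a-b)/((1-a)*b))
  have hia : (1:F) - a⁻¹ ≠ 0 := by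
    rw [show (1:F) - a⁻¹ = -((1 - a) / a) by field_simp; ring]
    exact neg_ne_zero.mpr (div_ne_zero ha1' ha0)
  have hib : (1:F) - b⁻¹ ≠ 0 := by
    rw [show (1:F) - b⁻¹ = -((1 - b) / b) by field_simp; ring]
    exact neg_ne_zero.mpr (div_ne_zero hb1' hb0)
  have k5 : ((1:F) - b⁻¹) / (1 - a⁻¹) = ((1 - b) * a) / ((1 - a) * b) := by
    rw [div_eq_div_iff hia (mul_ne_zero ha1' hb0)]
    field_simp
    ring
  have k6 : (1:F) - ((1:F) - b⁻¹) / (1 - a⁻¹) = -((a - b) / ((1 - a) * b)) := by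
    rw [k5]
    field_simp
    ring
  have e5 : boundaryTerm D ((1 - b⁻¹) / (1 - a⁻¹)) he0 he1 =
      (-(d5 - (d3 + d2))) ⊗ₜ[ℤ] ((Ub1 + Ua) - (Ua1 + Ub)) +
        (d4 + d1 - (d3 + d2)) ⊗ₜ[ℤ] (m + (Us - (Ua1 + Ub))) := by
    refine boundaryTerm_eq D ((1 - b⁻¹) / (1 - a⁻¹)) he0 he1 _ _ _ _ ?_ ?_ ?_ ?_
    · rw [k6, hdlneg _ (div_ne_zero hs (mul_ne_zero ha1' hb0)),
        hdldiv _ _ hs (mul_ne_zero ha1' hb0), hdlmul _ _ ha1' hb0]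
    · rw [k5, hdldiv _ _ (mul_ne_zero hb1' ha0) (mul_ne_zero ha1' hb0),
        hdlmul _ _ hb1' ha0, hdlmul _ _ ha1' hb0]
    · rw [hUb1, hUa, hUa1, hUb, ← ofMul_mul, ← ofMul_mul, ← ofMul_div]
      congr 1
      ext
      simp [k5]
    · rw [hUs, hUa1, hUb, hm, ← ofMul_mul, ← ofMul_div, ← ofMul_mul]
      congr 1
      ext
      simp [k6]
  rw [e1, e2, e3, e4, e5]
  simp only [TensorProduct.tmul_add, TensorProduct.tmul_sub, TensorProduct.add_tmul,
    TensorProduct.sub_tmul, TensorProduct.neg_tmul, hm, tmul_ofMul_neg_one]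
  abel
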